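/- arXiv:math/0106231 — 3 statements merged into one kernel-verified Lean document; each statement's English description precedes it below -/
import Mathlib

section
/- Let N > p > 1, γ ≥ 0, and q > (N+γ)(p−1)/(N−p). Then there exist constants C > 0 and α > 0 such that the function g(r) = C(1+r)^{−α} satisfies, for every r > 0, the differential inequality −|g'(r)|^{p−2} ( (p−1) g''(r) + ((N−1)/r) g'(r) ) ≥ r^γ · g(r)^q. In particular, the positive bounded radial function Γ(x) = g(|x|) on ℝ^N satisfies −Δ_p Γ(x) ≥ |x|^γ Γ(x)^q classically at every x ≠ 0. -/
/-- Counterexample showing optimality of the exponent `(N+γ)(p-1)/(N-p)`: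
for `q > (N+γ)(p-1)/(N-p)` the radial profile `g(r) = C(1+r)^{-α}` satisfies
`-|g'|^{p-2}((p-1)g'' + ((N-1)/r) g') ≥ r^γ g^q` for all `r > 0`, i.e. the radial
function `Γ(x) = g(|x|)` satisfies `-Δ_p Γ ≥ |x|^γ Γ^q` classically away from the origin. -/
theorem counterexample_supercritical
    (N : ℕ) (p γ q : ℝ) (hp : 1 < p) (hpN : p < N) (hγ : 0 ≤ γ)
    (hq : ((N : ℝ) + γ) * (p - 1) / ((N : ℝ) - p) < q) :
    ∃ C : ℝ, 0 < C ∧ ∃ α : ℝ, 0 < α ∧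
      ∀ r : ℝ, 0 < r →
        r ^ γ * (C * (1 + r) ^ (-α)) ^ q ≤
          -(|deriv (fun s : ℝ => C * (1 + s) ^ (-α)) r| ^ (p - 2) *
            ((p - 1) * deriv (deriv (fun s : ℝ => C * (1 + s) ^ (-α))) r +
              (((N : ℝ) - 1) / r) * deriv (fun s : ℝ => C * (1 + s) ^ (-α)) r)) := by
  have hNp : 0 < (N : ℝ) - p := by linarith
  have hk : ((N : ℝ) + γ) * (p - 1) < q * ((N : ℝ) - p) := by
    rw [div_lt_iff₀ hNp] at hq; linarith
  have hN1 : (1 : ℝ) < N := by linarith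
  have hqp : 0 < q - (p - 1) := by nlinarith
  set α : ℝ := (γ + p) / (q - (p - 1)) with hαdef
  have hα : 0 < α := div_pos (by linarith) hqp
  have hαkey : α * (q - (p - 1)) = γ + p := div_mul_cancel₀ _ hqp.ne'
  set ε : ℝ := (N : ℝ) - p - (p - 1) * α with hεdef
  have hε : 0 < ε := by
    have h1 : (p - 1) * α < (N : ℝ) - p := by
      rw [hαdef, ← mul_div_assoc, div_lt_iff₀ hqp]
      nlinarith
    rw [hεdef]; linarith
  have hX : (0 : ℝ) < α ^ (p - 1) * ε := mul_pos (Real.rpow_pos_of_pos hα _) hε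
  set C : ℝ := (α ^ (p - 1) * ε) ^ (1 / (q - (p - 1))) with hCdef
  have hC : 0 < C := Real.rpow_pos_of_pos hX _
  have hCkey : C ^ (q - (p - 1)) = α ^ (p - 1) * ε := by
    rw [hCdef, ← Real.rpow_mul hX.le, one_div_mul_cancel hqp.ne', Real.rpow_one]
  refine ⟨C, hC, α, hα, fun r hr => ?_⟩
  have h1r : (0 : ℝ) < 1 + r := by linarith
  have hK : 0 < C * α := mul_pos hC hα
  -- first derivative, on (-1, ∞)
  have hderiv : ∀ s : ℝ, -1 < s →
      HasDerivAt (fun s : ℝ => C * (1 + s) ^ (-α)) (C * (-α) * (1 + s) ^ (-α - 1)) s := by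
    intro s hs
    have h1 : HasDerivAt (fun s : ℝ => 1 + s) 1 s := by
      simpa using (hasDerivAt_id s).const_add (1 : ℝ)
    have h2 : HasDerivAt (fun x : ℝ => x ^ (-α)) (-α * (1 + s) ^ (-α - 1)) (1 + s) :=
      Real.hasDerivAt_rpow_const (Or.inl (by linarith))
    have h3 := (h2.comp s h1).const_mul C
    refine h3.congr_deriv ?_
    ring
  have hD1 : deriv (fun s : ℝ => C * (1 + s) ^ (-α)) r = C * (-α) * (1 + r) ^ (-α - 1) :=
    (hderiv r (by linarith)).deriv
  -- second derivative
  have hev : deriv (fun s : ℝ => C * (1 + s) ^ (-α)) =ᶠ[nhds r]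
      fun s : ℝ => C * (-α) * (1 + s) ^ (-α - 1) := by
    filter_upwards [eventually_gt_nhds (show (-1 : ℝ) < r by linarith)] with s hs
    exact (hderiv s hs).deriv
  have hd2 : HasDerivAt (fun s : ℝ => C * (-α) * (1 + s) ^ (-α - 1))
      (C * (-α) * (-α - 1) * (1 + r) ^ (-α - 2)) r := by
    have h1 : HasDerivAt (fun s : ℝ => 1 + s) 1 r := by
      simpa using (hasDerivAt_id r).const_add (1 : ℝ)
    have h2 : HasDerivAt (fun x : ℝ => x ^ (-α - 1)) ((-α - 1) * (1 + r) ^ (-α - 1 - 1)) (1 + r) :=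
      Real.hasDerivAt_rpow_const (Or.inl h1r.ne')
    have h3 := (h2.comp r h1).const_mul (C * (-α))
    refine h3.congr_deriv ?_
    rw [show -α - 1 - 1 = -α - 2 by ring]
    ring
  have hD2 : deriv (deriv (fun s : ℝ => C * (1 + s) ^ (-α))) r
      = C * (-α) * (-α - 1) * (1 + r) ^ (-α - 2) := by
    rw [hev.deriv_eq]; exact hd2.deriv
  have habs : |deriv (fun s : ℝ => C * (1 + s) ^ (-α)) r|
      = (C * α) * (1 + r) ^ (-α - 1) := by
    rw [hD1, abs_mul, abs_mul, abs_of_pos hC, abs_neg, abs_of_pos hα,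
      abs_of_pos (Real.rpow_pos_of_pos h1r _)]
  -- rewrite the right-hand side in closed form
  have hRHS :
      -(|deriv (fun s : ℝ => C * (1 + s) ^ (-α)) r| ^ (p - 2) *
        ((p - 1) * deriv (deriv (fun s : ℝ => C * (1 + s) ^ (-α))) r +
          (((N : ℝ) - 1) / r) * deriv (fun s : ℝ => C * (1 + s) ^ (-α)) r))
      = (C * α) ^ (p - 1) * (1 + r) ^ (-(α + 1) * (p - 1) - 1) *
          (((N : ℝ) - 1) * ((1 + r) / r) - (p - 1) * (α + 1)) := by
    rw [habs, hD1, hD2]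
    rw [Real.mul_rpow hK.le (Real.rpow_pos_of_pos h1r _).le,
      ← Real.rpow_mul h1r.le]
    have e1 : (C * α) ^ (p - 1) = (C * α) ^ (p - 2) * (C * α) := by
      rw [show p - 1 = (p - 2) + 1 by ring, Real.rpow_add hK, Real.rpow_one]
    have e2 : (1 + r) ^ (-(α + 1) * (p - 1) - 1)
        = (1 + r) ^ ((-α - 1) * (p - 2)) * (1 + r) ^ (-α - 2) := by
      rw [← Real.rpow_add h1r]; ring_nf
    have e3 : (1 + r) ^ (-α - 1) = (1 + r) ^ (-α - 2) * (1 + r) := by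
      rw [show -α - 1 = (-α - 2) + 1 by ring, Real.rpow_add h1r, Real.rpow_one]
    rw [e1, e2, e3]
    field_simp
    ring
  rw [hRHS]
  -- key exponent identity
  have hexp : γ - α * q = -(α + 1) * (p - 1) - 1 := by linear_combination -hαkey
  have htE : (0 : ℝ) < (1 + r) ^ (-(α + 1) * (p - 1) - 1) := Real.rpow_pos_of_pos h1r _
  have hB : ε ≤ ((N : ℝ) - 1) * ((1 + r) / r) - (p - 1) * (α + 1) := by
    have h1 : (1 : ℝ) ≤ (1 + r) / r := by
      rw [le_div_iff₀ hr]; linarith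
    have h2 : ((N : ℝ) - 1) * 1 ≤ ((N : ℝ) - 1) * ((1 + r) / r) :=
      mul_le_mul_of_nonneg_left h1 (by linarith)
    rw [hεdef]; nlinarith
  have hCq : C ^ q = (C * α) ^ (p - 1) * ε := by
    rw [Real.mul_rpow hC.le hα.le, mul_assoc, ← hCkey, ← Real.rpow_add hC]
    ring_nf
  calc r ^ γ * (C * (1 + r) ^ (-α)) ^ q
      ≤ (1 + r) ^ γ * (C * (1 + r) ^ (-α)) ^ q := by
        apply mul_le_mul_of_nonneg_right (Real.rpow_le_rpow hr.le (by linarith) hγ)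
        positivity
    _ = (C * α) ^ (p - 1) * ε * (1 + r) ^ (-(α + 1) * (p - 1) - 1) := by
        rw [Real.mul_rpow hC.le (Real.rpow_pos_of_pos h1r _).le,
          ← Real.rpow_mul h1r.le, hCq, show -α * q = γ - α * q - γ by ring,
          Real.rpow_sub h1r, hexp]
        field_simp
    _ ≤ (C * α) ^ (p - 1) * (1 + r) ^ (-(α + 1) * (p - 1) - 1) *
          (((N : ℝ) - 1) * ((1 + r) / r) - (p - 1) * (α + 1)) := by
        have hpos : (0 : ℝ) ≤ (C * α) ^ (p - 1) * (1 + r) ^ (-(α + 1) * (p - 1) - 1) :=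
          (mul_pos (Real.rpow_pos_of_pos hK (p - 1)) htE).le
        have h2 := mul_le_mul_of_nonneg_left hB hpos
        linarith [h2]
end

section
/- Let N > p > 1, γ ≥ 0 and q > p − 1. Suppose V : [0,∞) → ℝ is positive, C¹ on (0,∞), and satisfies r^{N−1} |V'(r)|^{p−2} V'(r) = − ∫₀^r s^{N−1+γ} V(s)^q ds for all r > 0, and V is nonincreasing. Then there exists a constant C > 0 such that V(r) ≤ C · r^{−(γ+p)/(q−p+1)} for all r > 0. -/
open Real MeasureTheory Set intervalIntegral

private lemma rpow_inv_le {x B c : ℝ} (hB : 0 ≤ B) (hx : 0 ≤ x) (hc : 0 < c)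
    (h : B ≤ x ^ c) : B ^ (1/c) ≤ x := by
  calc B ^ (1/c) ≤ (x ^ c) ^ (1/c) := Real.rpow_le_rpow hB h (by positivity)
  _ = x := by
    rw [← Real.rpow_mul hx, mul_one_div, div_self hc.ne', Real.rpow_one]

private lemma deriv_bd
    (N : ℕ) (p γ q : ℝ) (hp : 1 < p) (hpN : p < N) (hγ : 0 ≤ γ) (hq : p - 1 < q)
    (V : ℝ → ℝ)
    (hVpos : ∀ r : ℝ, 0 ≤ r → 0 < V r)
    (hV : ContDiffOn ℝ 1 V (Set.Ioi (0 : ℝ)))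
    (hmono : AntitoneOn V (Set.Ici (0 : ℝ)))
    (heq : ∀ r : ℝ, 0 < r →
      r ^ ((N : ℝ) - 1) * |deriv V r| ^ (p - 2) * deriv V r =
        -∫ s in (0 : ℝ)..r, s ^ ((N : ℝ) - 1 + γ) * V s ^ q) :
    ∀ s : ℝ, 0 < s →
      (V s ^ q * s ^ (1+γ) / ((N:ℝ)+γ)) ^ (1/(p-1)) ≤ -deriv V s := by
  intro s hs
  have hq0 : 0 < q := by linarith
  have hN1 : (1:ℝ) < (N:ℝ) := hp.trans hpN
  set c : ℝ := (N:ℝ) - 1 + γ with hc_def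
  have hc : 0 < c := by simp only [hc_def]; linarith
  have hc1 : c + 1 = (N:ℝ) + γ := by ring
  -- integrability
  have hint : IntervalIntegrable (fun t => t ^ c * V t ^ q) volume 0 s := by
    rw [intervalIntegrable_iff_integrableOn_Ioc_of_le hs.le]
    have hVc : ContinuousOn V (Ioc (0:ℝ) s) := hV.continuousOn.mono Ioc_subset_Ioi_self
    have hcont : ContinuousOn (fun t => t ^ c * V t ^ q) (Ioc (0:ℝ) s) := by
      apply ContinuousOn.mul
      · exact continuousOn_id.rpow_const fun x hx => Or.inl (ne_of_gt hx.1)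
      · exact hVc.rpow_const fun x hx => Or.inr hq0.le
    apply Integrable.mono' (g := fun _ => s ^ c * V 0 ^ q)
    · exact integrableOn_const measure_Ioc_lt_top.ne
    · exact hcont.aestronglyMeasurable measurableSet_Ioc
    · filter_upwards [ae_restrict_mem measurableSet_Ioc] with t ht
      have h1 : 0 < V t := hVpos t ht.1.le
      have h2 : t ^ c * V t ^ q = |t ^ c * V t ^ q| := by
        rw [abs_of_nonneg (mul_nonneg (Real.rpow_nonneg ht.1.le c) (Real.rpow_nonneg h1.le q))]
      rw [Real.norm_eq_abs, ← h2]
      apply mul_le_mul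
      · exact Real.rpow_le_rpow ht.1.le ht.2 hc.le
      · exact Real.rpow_le_rpow h1.le (hmono (Set.mem_Ici.2 le_rfl) ht.1.le ht.1.le) hq0.le
      · positivity
      · positivity
  -- integral lower bound
  have hK : V s ^ q * (s ^ (c+1) / (c+1)) ≤ ∫ t in (0:ℝ)..s, t ^ c * V t ^ q := by
    have h1 : ∫ t in (0:ℝ)..s, V s ^ q * t ^ c = V s ^ q * (s ^ (c+1) / (c+1)) := by
      rw [intervalIntegral.integral_const_mul, integral_rpow (Or.inl (by linarith)),
        Real.zero_rpow (by linarith : c + 1 ≠ 0), sub_zero]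
    rw [← h1]
    apply intervalIntegral.integral_mono_on hs.le _ hint
    · intro t ht
      rcases eq_or_lt_of_le ht.1 with h0 | h0
      · simp [← h0, Real.zero_rpow hc.ne']
      · have : V s ^ q ≤ V t ^ q :=
          Real.rpow_le_rpow (hVpos s hs.le).le (hmono ht.1 hs.le ht.2) hq0.le
        calc V s ^ q * t ^ c ≤ V t ^ q * t ^ c :=
              mul_le_mul_of_nonneg_right this (Real.rpow_nonneg ht.1 c)
          _ = t ^ c * V t ^ q := mul_comm _ _
    · apply ContinuousOn.intervalIntegrable
      exact (continuousOn_id.rpow_const (fun x hx => Or.inr hc.le)).const_smul (V s ^ q)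
  -- the key inequality from the equation
  have hKpos : 0 < V s ^ q * (s ^ (c+1) / (c+1)) := by
    have := hVpos s hs.le
    have h2 : (0:ℝ) < V s ^ q := Real.rpow_pos_of_pos this q
    have h3 : (0:ℝ) < s ^ (c+1) := Real.rpow_pos_of_pos hs _
    positivity
  have hmain := heq s hs
  have hneg : s ^ ((N:ℝ) - 1) * |deriv V s| ^ (p-2) * deriv V s
      ≤ -(V s ^ q * (s ^ (c+1) / (c+1))) := by
    rw [hmain]; exact neg_le_neg hK
  have hd : deriv V s < 0 := by
    by_contra h
    push_neg at h
    have h1 : 0 ≤ s ^ ((N:ℝ) - 1) * |deriv V s| ^ (p-2) * deriv V s := by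
      apply mul_nonneg _ h
      exact mul_nonneg (Real.rpow_nonneg hs.le _) (Real.rpow_nonneg (abs_nonneg _) _)
    linarith
  have habs : |deriv V s| = -deriv V s := abs_of_neg hd
  have hdd : 0 < -deriv V s := by linarith
  have hcollapse : |deriv V s| ^ (p-2) * deriv V s = -(-deriv V s) ^ (p-1) := by
    rw [habs, show p-1 = (p-2)+1 by ring, Real.rpow_add hdd, Real.rpow_one]; ring
  have hsN : 0 < s ^ ((N:ℝ)-1) := Real.rpow_pos_of_pos hs _
  have h5 : V s ^ q * (s ^ (c+1) / (c+1)) ≤ s ^ ((N:ℝ)-1) * (-deriv V s) ^ (p-1) := by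
    rw [mul_assoc, hcollapse, mul_neg] at hneg
    linarith
  have hexp' : s ^ (1+γ) * s ^ ((N:ℝ)-1) = s ^ (c+1) := by
    rw [← Real.rpow_add hs]; congr 1; ring
  have hBnn : 0 ≤ V s ^ q * s ^ (1+γ) / ((N:ℝ)+γ) := by
    have h1 := hVpos s hs.le
    have h2 : (0:ℝ) < V s ^ q := Real.rpow_pos_of_pos h1 q
    have h3 : (0:ℝ) < s ^ (1+γ) := Real.rpow_pos_of_pos hs _
    positivity
  have hB : V s ^ q * s ^ (1+γ) / ((N:ℝ)+γ) ≤ (-deriv V s) ^ (p-1) := by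
    rw [← mul_le_mul_iff_of_pos_right hsN]
    have h6 : V s ^ q * s ^ (1+γ) / ((N:ℝ)+γ) * s ^ ((N:ℝ)-1)
        = V s ^ q * (s ^ (c+1)/(c+1)) := by
      rw [← hc1, ← hexp']
      have hc1' : (0:ℝ) < c + 1 := by linarith
      field_simp
    rw [h6]
    calc V s ^ q * (s ^ (c+1)/(c+1)) ≤ s ^ ((N:ℝ)-1) * (-deriv V s) ^ (p-1) := h5
      _ = (-deriv V s) ^ (p-1) * s ^ ((N:ℝ)-1) := mul_comm _ _
  exact rpow_inv_le hBnn hdd.le (by linarith : (0:ℝ) < p-1) hB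

private lemma radial_aux_dbl
    (N : ℕ) (p γ q : ℝ) (hp : 1 < p) (hpN : p < N) (hγ : 0 ≤ γ) (hq : p - 1 < q)
    (V : ℝ → ℝ)
    (hVpos : ∀ r : ℝ, 0 ≤ r → 0 < V r)
    (hV : ContDiffOn ℝ 1 V (Set.Ioi (0 : ℝ)))
    (hmono : AntitoneOn V (Set.Ici (0 : ℝ)))
    (hderiv_bd : ∀ s : ℝ, 0 < s →
      (V s ^ q * s ^ (1+γ) / ((N:ℝ)+γ)) ^ (1/(p-1)) ≤ -deriv V s) :
    ∀ r : ℝ, 0 < r →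
      (V (2*r) ^ q * r ^ (1+γ) / ((N:ℝ)+γ)) ^ (1/(p-1)) * r ≤ V r := by
  intro r hr
  have hq0 : 0 < q := by linarith
  have hNγ : (0:ℝ) < (N:ℝ) + γ := by
    have : (1:ℝ) < (N:ℝ) := hp.trans hpN
    linarith
  set κ := (V (2*r) ^ q * r ^ (1+γ) / ((N:ℝ)+γ)) ^ (1/(p-1)) with hκ
  have h2r : (0:ℝ) < 2*r := by linarith
  have hsub : Set.uIcc r (2*r) ⊆ Set.Ioi (0:ℝ) := by
    rw [Set.uIcc_of_le (by linarith)]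
    intro x hx
    exact lt_of_lt_of_le hr hx.1
  have hderiv : ∀ x ∈ Set.uIcc r (2*r), HasDerivAt V (deriv V x) x := fun x hx =>
    ((hV.differentiableOn one_ne_zero).differentiableAt (isOpen_Ioi.mem_nhds (hsub hx))).hasDerivAt
  have hdc : ContinuousOn (deriv V) (Set.uIcc r (2*r)) :=
    (hV.continuousOn_deriv_of_isOpen isOpen_Ioi le_rfl).mono hsub
  have hdint : IntervalIntegrable (deriv V) volume r (2*r) := hdc.intervalIntegrable
  have hftc : ∫ x in r..(2*r), deriv V x = V (2*r) - V r :=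
    intervalIntegral.integral_eq_sub_of_hasDerivAt hderiv hdint
  have hpt : ∀ x ∈ Set.Icc r (2*r), κ ≤ -deriv V x := by
    intro x hx
    have hx0 : 0 < x := lt_of_lt_of_le hr hx.1
    refine le_trans ?_ (hderiv_bd x hx0)
    have hVx := hVpos x hx0.le
    have hV2 := hVpos (2*r) h2r.le
    apply Real.rpow_le_rpow
    · have h2 : (0:ℝ) < V (2*r) ^ q := Real.rpow_pos_of_pos hV2 q
      have h3 : (0:ℝ) < r ^ (1+γ) := Real.rpow_pos_of_pos hr _
      positivity
    · apply div_le_div_of_nonneg_right ?_ hNγ.le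
      apply mul_le_mul
      · exact Real.rpow_le_rpow hV2.le (hmono (Set.mem_Ici.2 hx0.le) (Set.mem_Ici.2 h2r.le) hx.2) hq0.le
      · exact Real.rpow_le_rpow hr.le hx.1 (by linarith)
      · exact (Real.rpow_pos_of_pos hr _).le
      · exact (Real.rpow_pos_of_pos hVx _).le
    · have hp1 : (0:ℝ) < p - 1 := by linarith
      positivity
  have hconst : ∫ _x in r..(2*r), κ = r * κ := by
    rw [intervalIntegral.integral_const, smul_eq_mul]
    ring
  have hmono_int : ∫ _x in r..(2*r), κ ≤ ∫ x in r..(2*r), -deriv V x :=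
    intervalIntegral.integral_mono_on (by linarith) intervalIntegrable_const hdint.neg hpt
  have hneg_int : ∫ x in r..(2*r), -deriv V x = V r - V (2*r) := by
    rw [intervalIntegral.integral_neg, hftc]
    ring
  have hV2 := hVpos (2*r) h2r.le
  rw [hconst, hneg_int] at hmono_int
  linarith


-- step inequality in "W" form
private lemma radial_aux_step (N : ℕ) (p γ q α : ℝ) (hp : 1 < p) (hpN : p < N) (hγ : 0 ≤ γ) (hq : p - 1 < q)
    (hα : α * (q - p + 1) = γ + p)
    (V : ℝ → ℝ)
    (hVpos : ∀ r : ℝ, 0 ≤ r → 0 < V r)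
    (hdbl : ∀ r : ℝ, 0 < r →
      (V (2*r) ^ q * r ^ (1+γ) / ((N:ℝ)+γ)) ^ (1/(p-1)) * r ≤ V r) :
    ∀ r : ℝ, 0 < r →
      V (2*r) * (2*r) ^ α ≤ (((N:ℝ)+γ) ^ (1/q) * 2 ^ α) * (V r * r ^ α) ^ ((p-1)/q) := by
  intro r hr
  have hq0 : 0 < q := by linarith
  have hp1 : (0:ℝ) < p - 1 := by linarith
  have hNγ : (0:ℝ) < (N:ℝ) + γ := by
    have : (1:ℝ) < (N:ℝ) := hp.trans hpN
    linarith
  have h2r : (0:ℝ) < 2*r := by linarith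
  have hu : 0 < V r := hVpos r hr.le
  have hu2 : 0 < V (2*r) := hVpos (2*r) h2r.le
  set B : ℝ := V (2*r) ^ q * r ^ (1+γ) / ((N:ℝ)+γ) with hB_def
  have hBpos : 0 < B := by
    have h2 : (0:ℝ) < V (2*r) ^ q := Real.rpow_pos_of_pos hu2 q
    have h3 : (0:ℝ) < r ^ (1+γ) := Real.rpow_pos_of_pos hr _
    positivity
  have h1 : B ^ (1/(p-1)) ≤ V r / r := by
    rw [le_div_iff₀ hr]; exact hdbl r hr
  have h2 : B ≤ (V r / r) ^ (p-1) := by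
    calc B = (B ^ (1/(p-1))) ^ (p-1) := by
          rw [← Real.rpow_mul hBpos.le, one_div, inv_mul_cancel₀ hp1.ne', Real.rpow_one]
      _ ≤ (V r / r) ^ (p-1) :=
          Real.rpow_le_rpow (Real.rpow_nonneg hBpos.le _) h1 hp1.le
  -- solve for V(2r)^q
  have h3 : V (2*r) ^ q ≤ (V r / r) ^ (p-1) * ((N:ℝ)+γ) / r ^ (1+γ) := by
    have hr1γ : (0:ℝ) < r ^ (1+γ) := Real.rpow_pos_of_pos hr _
    rw [hB_def, div_le_iff₀ hNγ] at h2
    rw [le_div_iff₀ hr1γ]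
    nlinarith [h2]
  set D : ℝ := (V r / r) ^ (p-1) * ((N:ℝ)+γ) / r ^ (1+γ) with hD_def
  have hDpos : 0 < D := by
    have h4 : (0:ℝ) < (V r / r) ^ (p-1) := Real.rpow_pos_of_pos (by positivity) _
    have h5 : (0:ℝ) < r ^ (1+γ) := Real.rpow_pos_of_pos hr _
    positivity
  have h6 : V (2*r) ≤ D ^ (1/q) := by
    calc V (2*r) = (V (2*r) ^ q) ^ (1/q) := by
          rw [← Real.rpow_mul hu2.le, mul_one_div, div_self hq0.ne', Real.rpow_one]
      _ ≤ D ^ (1/q) := Real.rpow_le_rpow (Real.rpow_nonneg hu2.le _) h3 (by positivity)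
  have h7 : V (2*r) * (2*r) ^ α ≤ D ^ (1/q) * (2*r) ^ α :=
    mul_le_mul_of_nonneg_right h6 (Real.rpow_nonneg h2r.le α)
  refine h7.trans_eq ?_
  -- now pure rpow algebra: D^(1/q) * (2r)^α = (N+γ)^(1/q) * 2^α * (V r * r^α)^((p-1)/q)
  have hL : 0 < D ^ (1/q) * (2*r) ^ α :=
    mul_pos (Real.rpow_pos_of_pos hDpos _) (Real.rpow_pos_of_pos h2r _)
  have hR : 0 < (((N:ℝ)+γ) ^ (1/q) * 2 ^ α) * (V r * r ^ α) ^ ((p-1)/q) := by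
    have := Real.rpow_pos_of_pos hNγ (1/q)
    have h8 : (0:ℝ) < (2:ℝ) ^ α := Real.rpow_pos_of_pos two_pos α
    have h9 : (0:ℝ) < V r * r ^ α := mul_pos hu (Real.rpow_pos_of_pos hr α)
    have := Real.rpow_pos_of_pos h9 ((p-1)/q)
    positivity
  rw [← Real.exp_log hL, ← Real.exp_log hR]
  congr 1
  have hrα : (0:ℝ) < r ^ α := Real.rpow_pos_of_pos hr α
  have hr1γ : (0:ℝ) < r ^ (1+γ) := Real.rpow_pos_of_pos hr _
  have hVrr : (0:ℝ) < V r / r := by positivity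
  have hVrp : (0:ℝ) < (V r / r) ^ (p-1) := Real.rpow_pos_of_pos hVrr _
  have h9 : (0:ℝ) < V r * r ^ α := mul_pos hu hrα
  have hcoef : α - (p-1)/q - (1+γ)/q - α*(p-1)/q = 0 := by
    field_simp
    linear_combination hα
  rw [Real.log_mul (Real.rpow_pos_of_pos hDpos _).ne' (Real.rpow_pos_of_pos h2r _).ne',
    Real.log_mul (mul_pos (Real.rpow_pos_of_pos hNγ (1/q)) (Real.rpow_pos_of_pos two_pos α)).ne'
      (Real.rpow_pos_of_pos h9 _).ne',
    Real.log_mul (Real.rpow_pos_of_pos hNγ (1/q)).ne' (Real.rpow_pos_of_pos two_pos α).ne',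
    Real.log_rpow hDpos, Real.log_rpow h2r, Real.log_rpow hNγ, Real.log_rpow two_pos,
    Real.log_rpow h9, Real.log_mul hu.ne' hrα.ne', Real.log_rpow hr,
    Real.log_mul (two_ne_zero) hr.ne', hD_def,
    Real.log_div (mul_pos hVrp hNγ).ne' hr1γ.ne',
    Real.log_mul hVrp.ne' hNγ.ne', Real.log_rpow hVrr, Real.log_rpow hr,
    Real.log_div hu.ne' hr.ne']
  linear_combination Real.log r * hcoef

-- induction + final assembly, given the step inequality
private lemma radial_aux_final (N : ℕ) (p γ q α : ℝ) (hp : 1 < p) (hpN : p < N) (hγ : 0 ≤ γ) (hq : p - 1 < q)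
    (hα_def : α = (γ + p) / (q - p + 1))
    (V : ℝ → ℝ)
    (hVpos : ∀ r : ℝ, 0 ≤ r → 0 < V r)
    (hmono : AntitoneOn V (Set.Ici (0 : ℝ)))
    (hstep : ∀ r : ℝ, 0 < r →
      V (2*r) * (2*r) ^ α ≤ (((N:ℝ)+γ) ^ (1/q) * 2 ^ α) * (V r * r ^ α) ^ ((p-1)/q)) :
    ∃ C : ℝ, 0 < C ∧ ∀ r : ℝ, 0 < r → V r ≤ C * r ^ (-(γ + p) / (q - p + 1)) := by
  have hq0 : 0 < q := by linarith
  have hqp : 0 < q - p + 1 := by linarith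
  have hα0 : 0 < α := by
    rw [hα_def]; positivity
  have hNγ : (0:ℝ) < (N:ℝ) + γ := by
    have : (1:ℝ) < (N:ℝ) := hp.trans hpN
    linarith
  set θ : ℝ := (p-1)/q with hθ_def
  have hp1 : (0:ℝ) < p - 1 := by linarith
  have hθ0 : 0 < θ := by rw [hθ_def]; positivity
  have hθ1 : θ < 1 := by rw [hθ_def, div_lt_one hq0]; linarith
  set A : ℝ := ((N:ℝ)+γ) ^ (1/q) * 2 ^ α with hA_def
  have hA : 0 < A := mul_pos (Real.rpow_pos_of_pos hNγ _) (Real.rpow_pos_of_pos two_pos _)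
  set M : ℝ := max (V 1) (A ^ (1/(1-θ))) with hM_def
  have hV1 := hVpos 1 zero_le_one
  have hM0 : 0 < M := lt_of_lt_of_le hV1 (le_max_left _ _)
  have hAM : A ≤ M ^ (1-θ) := by
    calc A = (A ^ (1/(1-θ))) ^ (1-θ) := by
          rw [← Real.rpow_mul hA.le, one_div, inv_mul_cancel₀ (by linarith : (1:ℝ)-θ ≠ 0),
            Real.rpow_one]
      _ ≤ M ^ (1-θ) := Real.rpow_le_rpow (Real.rpow_nonneg hA.le _) (le_max_right _ _)
            (by linarith)
  -- induction
  have hg : ∀ n : ℕ, V ((2:ℝ)^n) * ((2:ℝ)^n) ^ α ≤ M := by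
    intro n
    induction n with
    | zero =>
      simp only [pow_zero, Real.one_rpow, mul_one]
      exact le_max_left _ _
    | succ n ih =>
      have hpow : (0:ℝ) < (2:ℝ)^n := by positivity
      have h1 : ((2:ℝ)^(n+1) : ℝ) = 2 * (2:ℝ)^n := by ring
      have h2 := hstep ((2:ℝ)^n) hpow
      have h3 : (V ((2:ℝ)^n) * ((2:ℝ)^n) ^ α) ^ θ ≤ M ^ θ := by
        apply Real.rpow_le_rpow _ ih hθ0.le
        exact mul_nonneg (hVpos _ hpow.le).le (Real.rpow_nonneg hpow.le _)
      calc V ((2:ℝ)^(n+1)) * ((2:ℝ)^(n+1)) ^ α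
          = V (2 * (2:ℝ)^n) * (2 * (2:ℝ)^n) ^ α := by rw [h1]
        _ ≤ A * (V ((2:ℝ)^n) * ((2:ℝ)^n) ^ α) ^ θ := h2
        _ ≤ A * M ^ θ := by
            apply mul_le_mul_of_nonneg_left h3 hA.le
        _ ≤ M ^ (1-θ) * M ^ θ := mul_le_mul_of_nonneg_right hAM (Real.rpow_nonneg hM0.le _)
        _ = M := by rw [← Real.rpow_add hM0]; simp
  -- assemble
  have hV0 := hVpos 0 le_rfl
  have h2α : (0:ℝ) < (2:ℝ) ^ α := Real.rpow_pos_of_pos two_pos _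
  refine ⟨V 0 + M * 2 ^ α, by positivity, ?_⟩
  intro r hr
  have hexp : -(γ + p) / (q - p + 1) = -α := by rw [hα_def]; field_simp
  rw [hexp]
  have hrα : (0:ℝ) < r ^ (-α) := Real.rpow_pos_of_pos hr _
  rcases le_or_gt r 1 with hr1 | hr1
  · have hVr : V r ≤ V 0 := hmono (Set.mem_Ici.2 le_rfl) hr.le hr.le
    have hone : 1 ≤ r ^ (-α) :=
      Real.one_le_rpow_of_pos_of_le_one_of_nonpos hr hr1 (by linarith)
    nlinarith [mul_pos hM0 h2α]
  · set n : ℕ := ⌊Real.logb 2 r⌋₊ with hn_def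
    have hlogb : 0 ≤ Real.logb 2 r := Real.logb_nonneg one_lt_two hr1.le
    have hrlogb : (2:ℝ) ^ Real.logb 2 r = r := Real.rpow_logb two_pos (by norm_num) hr
    have h1 : (2:ℝ)^n ≤ r := by
      rw [← Real.rpow_natCast 2 n, ← hrlogb]
      exact Real.rpow_le_rpow_of_exponent_le one_le_two (Nat.floor_le hlogb)
    have h2 : r ≤ 2 * (2:ℝ)^n := by
      have : r ≤ (2:ℝ) ^ ((n:ℝ)+1) := by
        rw [← hrlogb]
        exact Real.rpow_le_rpow_of_exponent_le one_le_two (Nat.lt_floor_add_one _).le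
      calc r ≤ (2:ℝ) ^ ((n:ℝ)+1) := this
        _ = 2 * (2:ℝ)^n := by
          rw [Real.rpow_add two_pos, Real.rpow_natCast, Real.rpow_one]; ring
    have hpow : (0:ℝ) < (2:ℝ)^n := by positivity
    have hpowα : (0:ℝ) < ((2:ℝ)^n) ^ α := Real.rpow_pos_of_pos hpow _
    have hVr : V r ≤ V ((2:ℝ)^n) := hmono hpow.le hr.le h1
    have h3 : V ((2:ℝ)^n) ≤ M * ((2:ℝ)^n) ^ (-α) := by
      rw [← mul_le_mul_iff_of_pos_right hpowα, mul_assoc, ← Real.rpow_add hpow, neg_add_cancel,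
        Real.rpow_zero, mul_one]
      exact hg n
    have h4 : ((2:ℝ)^n) ^ (-α) ≤ (r/2) ^ (-α) :=
      Real.rpow_le_rpow_of_nonpos (by positivity) (by linarith) (by linarith)
    have h5 : (r/2) ^ (-α) = r ^ (-α) * 2 ^ α := by
      rw [Real.div_rpow hr.le (by norm_num), Real.rpow_neg (by norm_num : (0:ℝ) ≤ 2),
        div_inv_eq_mul]
    calc V r ≤ V ((2:ℝ)^n) := hVr
      _ ≤ M * ((2:ℝ)^n) ^ (-α) := h3
      _ ≤ M * (r/2) ^ (-α) := mul_le_mul_of_nonneg_left h4 hM0.le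
      _ = M * 2 ^ α * r ^ (-α) := by rw [h5]; ring
      _ ≤ (V 0 + M * 2 ^ α) * r ^ (-α) := by nlinarith


/-- Decay estimate for radial solutions: if `V > 0`, `V` nonincreasing, and
`r^{N-1}|V'|^{p-2}V' = -∫₀^r s^{N-1+γ}V^q`, then `V(r) ≤ C r^{-(γ+p)/(q-p+1)}`. -/
theorem radial_solution_decay
    (N : ℕ) (p γ q : ℝ) (hp : 1 < p) (hpN : p < N) (hγ : 0 ≤ γ) (hq : p - 1 < q)
    (V : ℝ → ℝ)
    (hVpos : ∀ r : ℝ, 0 ≤ r → 0 < V r)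
    (hV : ContDiffOn ℝ 1 V (Set.Ioi (0 : ℝ)))
    (hmono : AntitoneOn V (Set.Ici (0 : ℝ)))
    (heq : ∀ r : ℝ, 0 < r →
      r ^ ((N : ℝ) - 1) * |deriv V r| ^ (p - 2) * deriv V r =
        -∫ s in (0 : ℝ)..r, s ^ ((N : ℝ) - 1 + γ) * V s ^ q) :
    ∃ C : ℝ, 0 < C ∧ ∀ r : ℝ, 0 < r → V r ≤ C * r ^ (-(γ + p) / (q - p + 1)) := by
  have hd := deriv_bd N p γ q hp hpN hγ hq V hVpos hV hmono heq
  have hdbl := radial_aux_dbl N p γ q hp hpN hγ hq V hVpos hV hmono hd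
  have hqp : (0:ℝ) < q - p + 1 := by linarith
  have hα : (γ+p)/(q-p+1) * (q - p + 1) = γ + p := div_mul_cancel₀ _ hqp.ne'
  have hstep := radial_aux_step N p γ q ((γ+p)/(q-p+1)) hp hpN hγ hq hα V hVpos hdbl
  exact radial_aux_final N p γ q ((γ+p)/(q-p+1)) hp hpN hγ hq rfl V hVpos hmono hstep
end

section
/- Let N > p > 1, γ ≥ 0 and q ≥ (N+γ)(p−1)/(N−p). Suppose V : [0,∞) → ℝ is positive, C¹ on (0,∞), nonincreasing, and satisfies r^{N−1} |V'(r)|^{p−2} V'(r) = − ∫₀^r s^{N−1+γ} V(s)^q ds for all r > 0. Then there exists a constant C > 0 such that |V'(r)| ≤ C · r^{−(γ+q+1)/(q−p+1)} for all r > 0. -/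
open MeasureTheory Set

set_option maxHeartbeats 1000000 in
/-- Derivative decay estimate for radial solutions: if `V > 0`, `V` nonincreasing,
`q ≥ (N+γ)(p-1)/(N-p)` and `r^{N-1}|V'|^{p-2}V' = -∫₀^r s^{N-1+γ}V^q`, then
`|V'(r)| ≤ C r^{-(γ+q+1)/(q-p+1)}`. -/
theorem radial_solution_derivative_decay
    (N : ℕ) (p γ q : ℝ) (hp : 1 < p) (hpN : p < N) (hγ : 0 ≤ γ)
    (hq : ((N : ℝ) + γ) * (p - 1) / ((N : ℝ) - p) ≤ q)
    (V : ℝ → ℝ)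
    (hVpos : ∀ r : ℝ, 0 ≤ r → 0 < V r)
    (hV : ContDiffOn ℝ 1 V (Set.Ioi (0 : ℝ)))
    (hmono : AntitoneOn V (Set.Ici (0 : ℝ)))
    (heq : ∀ r : ℝ, 0 < r →
      r ^ ((N : ℝ) - 1) * |deriv V r| ^ (p - 2) * deriv V r =
        -∫ s in (0 : ℝ)..r, s ^ ((N : ℝ) - 1 + γ) * V s ^ q) :
    ∃ C : ℝ, 0 < C ∧ ∀ r : ℝ, 0 < r →
      |deriv V r| ≤ C * r ^ (-(γ + q + 1) / (q - p + 1)) := by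
  have hp0 : (0:ℝ) < p - 1 := by linarith
  have hN1 : (1:ℝ) < (N:ℝ) := lt_trans hp hpN
  have hN2 : (2:ℝ) ≤ (N:ℝ) := by
    have h1 : 1 < N := by exact_mod_cast hN1
    exact_mod_cast h1
  have hNp : (0:ℝ) < (N:ℝ) - p := by linarith
  have hqp : p - 1 < q := by
    have h1 : p - 1 < ((N : ℝ) + γ) * (p - 1) / ((N : ℝ) - p) := by
      rw [lt_div_iff₀ hNp]; nlinarith
    linarith
  have hq0 : (0:ℝ) < q := by linarith
  have hθ : (0:ℝ) < q - p + 1 := by linarith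
  have he1nn : (0:ℝ) ≤ (N:ℝ) - 1 + γ := by linarith
  have he1pos : (0:ℝ) < (N:ℝ) - 1 + γ := by linarith
  have hNγ : (0:ℝ) < (N:ℝ) + γ := by linarith
  -- basic regularity facts
  have hVc : ContinuousOn V (Set.Ioi 0) := hV.continuousOn
  have hVd : ∀ x : ℝ, 0 < x → HasDerivAt V (deriv V x) x := by
    intro x hx
    have h1 : ContDiffAt ℝ 1 V x := hV.contDiffAt (isOpen_Ioi.mem_nhds hx)
    exact (h1.differentiableAt one_ne_zero).hasDerivAt
  have hV'c : ContinuousOn (deriv V) (Set.Ioi 0) := by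
    have h1 := hV.continuousOn_derivWithin (uniqueDiffOn_Ioi 0) le_rfl
    exact h1.congr fun x hx => (derivWithin_of_isOpen isOpen_Ioi hx).symm
  -- the integrand
  set f : ℝ → ℝ := fun s => s ^ ((N:ℝ) - 1 + γ) * V s ^ q with hf
  have hfnn : ∀ s : ℝ, 0 ≤ s → 0 ≤ f s := fun s hs =>
    mul_nonneg (Real.rpow_nonneg hs _) (Real.rpow_nonneg (hVpos s hs).le _)
  have hfc : ContinuousOn f (Set.Ioi 0) := by
    apply ContinuousOn.mul
    · exact fun x hx =>
        (Real.continuousAt_rpow_const x _ (Or.inl (ne_of_gt hx))).continuousWithinAt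
    · exact hVc.rpow_const fun x hx => Or.inl (ne_of_gt (hVpos x (le_of_lt hx)))
  have hfi : ∀ r : ℝ, 0 < r → IntervalIntegrable f volume 0 r := by
    intro r hr
    rw [intervalIntegrable_iff_integrableOn_Ioc_of_le hr.le]
    have hmeas : MeasurableSet (Set.Ioc (0:ℝ) r) := measurableSet_Ioc
    refine MeasureTheory.Integrable.mono'
      (g := fun _ => r ^ ((N:ℝ)-1+γ) * V 0 ^ q) (integrableOn_const measure_Ioc_lt_top.ne)
      ((hfc.mono Set.Ioc_subset_Ioi_self).aestronglyMeasurable hmeas) ?_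
    rw [MeasureTheory.ae_restrict_iff' hmeas]
    filter_upwards with s hs
    have hs0 : 0 < s := hs.1
    have h1 : s ^ ((N:ℝ)-1+γ) ≤ r ^ ((N:ℝ)-1+γ) := Real.rpow_le_rpow hs0.le hs.2 he1nn
    have h2 : V s ^ q ≤ V 0 ^ q :=
      Real.rpow_le_rpow (hVpos s hs0.le).le
        (hmono (Set.self_mem_Ici) (Set.mem_Ici.2 hs0.le) hs0.le) hq0.le
    have h3 : 0 ≤ f s := hfnn s hs0.le
    rw [Real.norm_eq_abs, abs_of_nonneg h3]
    exact mul_le_mul h1 h2 (Real.rpow_nonneg (hVpos s hs0.le).le _) (Real.rpow_nonneg hr.le _)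
  set I : ℝ → ℝ := fun r => ∫ s in (0:ℝ)..r, f s with hI
  -- lower bound for I
  have hIlow : ∀ r : ℝ, 0 < r → V r ^ q * r ^ ((N:ℝ)+γ) / ((N:ℝ)+γ) ≤ I r := by
    intro r hr
    have h1 : ∫ s in (0:ℝ)..r, V r ^ q * s ^ ((N:ℝ)-1+γ) ≤ I r := by
      apply intervalIntegral.integral_mono_on hr.le
        ((intervalIntegral.intervalIntegrable_rpow (Or.inl he1nn)).const_mul _) (hfi r hr)
      intro s hs
      rcases eq_or_lt_of_le hs.1 with h | h
      · simp [hf, ← h, Real.zero_rpow (ne_of_gt he1pos)]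
      · have hsr : V r ^ q ≤ V s ^ q :=
          Real.rpow_le_rpow (hVpos r hr.le).le
            (hmono (Set.mem_Ici.2 h.le) (Set.mem_Ici.2 hr.le) hs.2) hq0.le
        calc V r ^ q * s ^ ((N:ℝ)-1+γ) ≤ V s ^ q * s ^ ((N:ℝ)-1+γ) :=
              mul_le_mul_of_nonneg_right hsr (Real.rpow_nonneg h.le _)
          _ = f s := by rw [hf]; ring
    have h2 : ∫ s in (0:ℝ)..r, V r ^ q * s ^ ((N:ℝ)-1+γ)
        = V r ^ q * (r ^ ((N:ℝ)+γ) / ((N:ℝ)+γ)) := by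
      rw [intervalIntegral.integral_const_mul,
        integral_rpow (Or.inl (by linarith : (-1:ℝ) < (N:ℝ)-1+γ)),
        show (N:ℝ) - 1 + γ + 1 = (N:ℝ) + γ by ring,
        Real.zero_rpow (ne_of_gt hNγ), sub_zero]
    rw [h2] at h1
    rw [mul_div_assoc]
    exact h1
  have hIpos : ∀ r : ℝ, 0 < r → 0 < I r := by
    intro r hr
    refine lt_of_lt_of_le ?_ (hIlow r hr)
    have hVr := hVpos r hr.le
    positivity
  -- key identity: V' < 0 and r^{N-1}|V'|^{p-1} = I r
  have hkey : ∀ r : ℝ, 0 < r →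
      deriv V r < 0 ∧ r ^ ((N:ℝ)-1) * |deriv V r| ^ (p-1) = I r := by
    intro r hr
    have h0 := heq r hr
    have hrp : (0:ℝ) < r ^ ((N:ℝ)-1) := Real.rpow_pos_of_pos hr _
    have hd : deriv V r < 0 := by
      by_contra h
      push_neg at h
      have h1 : 0 ≤ r ^ ((N:ℝ)-1) * |deriv V r| ^ (p-2) * deriv V r :=
        mul_nonneg (mul_nonneg hrp.le (Real.rpow_nonneg (abs_nonneg _) _)) h
      rw [h0] at h1
      linarith [hIpos r hr]
    refine ⟨hd, ?_⟩
    have hane : |deriv V r| ≠ 0 := by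
      rw [abs_of_neg hd]; exact ne_of_gt (by linarith)
    have h2 : |deriv V r| ^ (p-1) = |deriv V r| ^ (p-2) * |deriv V r| := by
      rw [show p - 1 = p - 2 + 1 by ring, Real.rpow_add_one hane]
    have h3 : r ^ ((N:ℝ)-1) * |deriv V r| ^ (p-1)
        = -(r ^ ((N:ℝ)-1) * |deriv V r| ^ (p-2) * deriv V r) := by
      rw [h2, abs_of_neg hd]; ring
    rw [h3, h0, neg_neg]
  -- monotonicity of I
  have hImono : ∀ r R : ℝ, 0 < r → r ≤ R → I r ≤ I R := by
    intro r R hr hrR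
    have hR : 0 < R := lt_of_lt_of_le hr hrR
    have h2 : IntervalIntegrable f volume r R := by
      refine (hfi R hR).mono_set ?_
      rw [Set.uIcc_of_le hrR, Set.uIcc_of_le hR.le]
      exact Set.Icc_subset_Icc hr.le le_rfl
    have h3 := intervalIntegral.integral_add_adjacent_intervals (hfi r hr) h2
    have h4 : 0 ≤ ∫ s in r..R, f s :=
      intervalIntegral.integral_nonneg hrR (fun u hu => hfnn u (le_trans hr.le hu.1))
    rw [hI]; dsimp only; linarith [h3, h4]
  set c₀ : ℝ := (2:ℝ) ^ (((N:ℝ)-1)/(p-1)) with hc₀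
  have hc₀pos : 0 < c₀ := Real.rpow_pos_of_pos two_pos _
  -- Step 2 : |V'(r)| * r ≤ c₀ * V r
  have hstep2 : ∀ r : ℝ, 0 < r → |deriv V r| * r ≤ c₀ * V r := by
    intro r hr
    have h2r : r < 2 * r := by linarith
    -- pointwise: on [r, 2r], |V'(r)|/c₀ ≤ -V'(s)
    have hpt : ∀ s ∈ Set.Icc r (2*r), |deriv V r| / c₀ ≤ -deriv V s := by
      intro s hs
      have hs0 : 0 < s := lt_of_lt_of_le hr hs.1
      obtain ⟨hdns, heqs⟩ := hkey s hs0
      obtain ⟨hdnr, heqr⟩ := hkey r hr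
      have hIrs : I r ≤ I s := hImono r s hr hs.1
      have hmain : r ^ ((N:ℝ)-1) * |deriv V r| ^ (p-1)
          ≤ r ^ ((N:ℝ)-1) * ((2:ℝ) ^ ((N:ℝ)-1) * |deriv V s| ^ (p-1)) := by
        rw [heqr]
        have h1 : s ^ ((N:ℝ)-1) ≤ (2*r) ^ ((N:ℝ)-1) :=
          Real.rpow_le_rpow hs0.le hs.2 (by linarith)
        have h2 : (2*r) ^ ((N:ℝ)-1) = (2:ℝ) ^ ((N:ℝ)-1) * r ^ ((N:ℝ)-1) :=
          Real.mul_rpow (by norm_num) hr.le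
        calc I r ≤ I s := hIrs
          _ = s ^ ((N:ℝ)-1) * |deriv V s| ^ (p-1) := heqs.symm
          _ ≤ (2*r) ^ ((N:ℝ)-1) * |deriv V s| ^ (p-1) :=
              mul_le_mul_of_nonneg_right h1 (Real.rpow_nonneg (abs_nonneg _) _)
          _ = r ^ ((N:ℝ)-1) * ((2:ℝ) ^ ((N:ℝ)-1) * |deriv V s| ^ (p-1)) := by
              rw [h2]; ring
      have hrp : (0:ℝ) < r ^ ((N:ℝ)-1) := Real.rpow_pos_of_pos hr _
      have h3 : |deriv V r| ^ (p-1) ≤ (2:ℝ) ^ ((N:ℝ)-1) * |deriv V s| ^ (p-1) :=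
        le_of_mul_le_mul_left (by linarith [hmain]) hrp
      have h4 : (2:ℝ) ^ ((N:ℝ)-1) = c₀ ^ (p-1) := by
        rw [hc₀, ← Real.rpow_mul (by norm_num : (0:ℝ) ≤ 2), div_mul_cancel₀ _ (ne_of_gt hp0)]
      have h5 : |deriv V r| ^ (p-1) ≤ (c₀ * |deriv V s|) ^ (p-1) := by
        rw [Real.mul_rpow hc₀pos.le (abs_nonneg _), ← h4]
        exact h3
      have h6 : |deriv V r| ≤ c₀ * |deriv V s| :=
        (Real.rpow_le_rpow_iff (abs_nonneg _)
          (mul_nonneg hc₀pos.le (abs_nonneg _)) hp0).mp h5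
      rw [div_le_iff₀ hc₀pos]
      rw [abs_of_neg hdns] at h6
      linarith
    -- FTC on [r, 2r]
    have hsub : Set.uIcc r (2*r) ⊆ Set.Ioi (0:ℝ) := by
      rw [Set.uIcc_of_le h2r.le]
      exact fun x hx => lt_of_lt_of_le hr hx.1
    have hint : IntervalIntegrable (deriv V) volume r (2*r) :=
      (hV'c.mono hsub).intervalIntegrable
    have hftc : ∫ s in r..(2*r), deriv V s = V (2*r) - V r :=
      intervalIntegral.integral_deriv_eq_sub
        (fun x hx => ((hVd x (hsub hx)).differentiableAt)) hint
    have hlow : (2*r - r) * (|deriv V r| / c₀) ≤ ∫ s in r..(2*r), -deriv V s := by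
      have h7 := intervalIntegral.integral_mono_on h2r.le
        (intervalIntegrable_const) hint.neg hpt
      rw [intervalIntegral.integral_const, smul_eq_mul] at h7
      exact h7
    have h8 : ∫ s in r..(2*r), -deriv V s = V r - V (2*r) := by
      rw [intervalIntegral.integral_neg, hftc]; ring
    have hV2r : 0 < V (2*r) := hVpos _ (by linarith)
    have h9 : r * (|deriv V r| / c₀) ≤ V r := by
      rw [h8] at hlow
      have he : (2*r - r) = r := by ring
      rw [he] at hlow
      linarith
    rw [← mul_div_assoc, div_le_iff₀ hc₀pos] at h9
    linarith
  -- Step 3 : V r ^ q * r^{γ+1} / (N+γ) ≤ |V'(r)|^{p-1}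
  have hstep3 : ∀ r : ℝ, 0 < r →
      V r ^ q * r ^ (γ+1) / ((N:ℝ)+γ) ≤ |deriv V r| ^ (p-1) := by
    intro r hr
    obtain ⟨hdn, heqr⟩ := hkey r hr
    have hrp : (0:ℝ) < r ^ ((N:ℝ)-1) := Real.rpow_pos_of_pos hr _
    have h1 : V r ^ q * r ^ ((N:ℝ)+γ) / ((N:ℝ)+γ) ≤ r ^ ((N:ℝ)-1) * |deriv V r| ^ (p-1) := by
      rw [heqr]; exact hIlow r hr
    have h2 : r ^ ((N:ℝ)+γ) = r ^ ((N:ℝ)-1) * r ^ (γ+1) := by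
      rw [← Real.rpow_add hr]; congr 1; ring
    rw [div_le_iff₀ hNγ] at h1 ⊢
    rw [h2] at h1
    nlinarith [h1, hrp, Real.rpow_nonneg (abs_nonneg (deriv V r)) (p-1),
      Real.rpow_nonneg (hVpos r hr.le).le q, Real.rpow_nonneg hr.le (γ+1)]
  -- decay of V
  set B : ℝ := ((N:ℝ)+γ) * c₀ ^ (p-1) with hB
  have hBpos : 0 < B := mul_pos hNγ (Real.rpow_pos_of_pos hc₀pos _)
  set A : ℝ := B ^ (1/(q-p+1)) with hA
  have hApos : 0 < A := Real.rpow_pos_of_pos hBpos _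
  have hdecay : ∀ r : ℝ, 0 < r → V r ≤ A * r ^ (-(γ+p)/(q-p+1)) := by
    intro r hr
    have hVr := hVpos r hr.le
    have h2 := hstep2 r hr
    have h3 := hstep3 r hr
    have h4 : |deriv V r| ^ (p-1) ≤ (c₀ * V r / r) ^ (p-1) := by
      apply Real.rpow_le_rpow (abs_nonneg _) _ hp0.le
      rw [le_div_iff₀ hr]
      linarith [h2]
    have h5 : (c₀ * V r / r) ^ (p-1) = c₀ ^ (p-1) * V r ^ (p-1) / r ^ (p-1) := by
      rw [Real.div_rpow (by positivity) hr.le, Real.mul_rpow hc₀pos.le hVr.le]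
    -- V r ^ q * r^{γ+1} / (N+γ) ≤ c₀^{p-1} V r^{p-1} / r^{p-1}
    have h6 : V r ^ q * r ^ (γ+1) * r ^ (p-1) ≤ B * V r ^ (p-1) := by
      rw [h5] at h4
      have h7 : V r ^ q * r ^ (γ+1) / ((N:ℝ)+γ) ≤ c₀ ^ (p-1) * V r ^ (p-1) / r ^ (p-1) :=
        le_trans h3 h4
      rw [div_le_div_iff₀ hNγ (Real.rpow_pos_of_pos hr _)] at h7
      rw [hB]
      nlinarith [h7]
    have h8 : r ^ (γ+1) * r ^ (p-1) = r ^ (γ+p) := by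
      rw [← Real.rpow_add hr]; congr 1; ring
    have h9 : V r ^ q = V r ^ (q-p+1) * V r ^ (p-1) := by
      rw [← Real.rpow_add hVr]; congr 1; ring
    have h10 : V r ^ (q-p+1) ≤ B * r ^ (-(γ+p)) := by
      have hVp1 : (0:ℝ) < V r ^ (p-1) := Real.rpow_pos_of_pos hVr _
      have hrgp : (0:ℝ) < r ^ (γ+p) := Real.rpow_pos_of_pos hr _
      have h11 : V r ^ (q-p+1) * r ^ (γ+p) ≤ B := by
        have := h6
        rw [mul_assoc, h8, h9] at this
        -- V^{q-p+1} * V^{p-1} * r^{γ+p} ≤ B * V^{p-1}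
        nlinarith [this, hVp1, hrgp, Real.rpow_nonneg hVr.le (q-p+1)]
      rw [Real.rpow_neg hr.le, ← div_eq_mul_inv, le_div_iff₀ hrgp]
      exact h11
    -- raise to power 1/(q-p+1)
    have h12 := Real.rpow_le_rpow (Real.rpow_nonneg hVr.le _) h10 (by positivity : (0:ℝ) ≤ 1/(q-p+1))
    have h13 : (V r ^ (q-p+1)) ^ (1/(q-p+1)) = V r := by
      rw [← Real.rpow_mul hVr.le, mul_one_div, div_self (ne_of_gt hθ), Real.rpow_one]
    have h14 : (B * r ^ (-(γ+p))) ^ (1/(q-p+1)) = A * r ^ (-(γ+p)/(q-p+1)) := by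
      rw [Real.mul_rpow hBpos.le (Real.rpow_nonneg hr.le _), ← Real.rpow_mul hr.le, hA]
      congr 2
      ring
    rw [h13, h14] at h12
    exact h12
  -- conclusion
  refine ⟨c₀ * A, mul_pos hc₀pos hApos, ?_⟩
  intro r hr
  have h2 := hstep2 r hr
  have hd := hdecay r hr
  have h3 : |deriv V r| ≤ c₀ * V r / r := by
    rw [le_div_iff₀ hr]; linarith
  have h4 : c₀ * V r / r ≤ c₀ * (A * r ^ (-(γ+p)/(q-p+1))) / r := by
    gcongr c₀ * ?_ / r
  have h5 : c₀ * (A * r ^ (-(γ+p)/(q-p+1))) / r = (c₀*A) * r ^ (-(γ+q+1)/(q-p+1)) := by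
    rw [show -(γ+q+1)/(q-p+1) = -(γ+p)/(q-p+1) - 1 by field_simp; ring,
        Real.rpow_sub hr, Real.rpow_one]
    ring
  linarith
end
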